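/- In the state machine for (FIFO) work-stealing with weak multiplicity, if all inserted tasks are pairwise distinct, then each fixed process extracts any given task at most once: in any finite sequence of transitions from the initial state, no two distinct Take transitions (respectively, no two distinct Steal_i transitions of the same thief i) return the same task. -/

import Mathlib

/-- Labels for the (FIFO) work-stealing with weak multiplicity state machine:
a `Put` of task `x`, an extraction (Take if `i = 0`, Steal otherwise) by
process `i` returning task `x`, or an extraction on an empty component
returning `empty`. -/
inductive WLab (n : ℕ) where
  | put (x : ℕ) : WLab n
  | extract (i : Fin n) (x : ℕ) : WLab n
  | extractEmpty (i : Fin n) : WLab n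

/-- Transition relation of the weak-multiplicity state machine.  States are
`n`-vectors of finite strings over ℕ (head of each string at the front).
`put x` appends `x` to every component.  An extraction by process `i` on
`t_i = x_1 ⋯ x_j · q`, where `x_j · q` is the shortest component (encoded by
`hshort`: some component `p` satisfies `k + |t_p| ≤ |t_i| + 1`, equivalently
`k ≤ j` for `j` determined by the minimum length), returns `x_k` for some
`1 ≤ k ≤ j` and replaces `t_i` by `x_{k+1} ⋯ x_j · q`. -/
inductive WStep {n : ℕ} : (Fin n → List ℕ) → WLab n → (Fin n → List ℕ) → Prop
  | put (s : Fin n → List ℕ) (x : ℕ) :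
      WStep s (.put x) (fun i => s i ++ [x])
  | extract (s : Fin n → List ℕ) (i : Fin n) (k x : ℕ)
      (hk1 : 1 ≤ k) (hk2 : k ≤ (s i).length)
      (hshort : ∃ p, k + (s p).length ≤ (s i).length + 1)
      (hx : (s i)[k - 1]? = some x) :
      WStep s (.extract i x) (Function.update s i ((s i).drop k))
  | extractEmpty (s : Fin n → List ℕ) (i : Fin n) (h : s i = []) :
      WStep s (.extractEmpty i) s

/-- Finite executions of the weak-multiplicity machine from the all-empty
initial state, recording the trace of transitions and the resulting state. -/
inductive WExec {n : ℕ} : List (WLab n) → (Fin n → List ℕ) → Prop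
  | nil : WExec [] (fun _ => [])
  | snoc {tr : List (WLab n)} {s : Fin n → List ℕ} {l : WLab n} {s' : Fin n → List ℕ} :
      WExec tr s → WStep s l s' → WExec (tr ++ [l]) s'

/-- The string of tasks inserted so far: the arguments of `put` transitions,
in order. -/
def winserted {n : ℕ} (tr : List (WLab n)) : List ℕ :=
  tr.filterMap fun l => match l with | .put x => some x | _ => none

/-- if all inserted tasks are pairwise distinct, then each fixed
process extracts any given task at most once: no two distinct extraction
transitions of the same process return the same task. -/
lemma get?_take' {α : Type*} (l : List α) {m k : ℕ} (h : m < k) :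
    (l.take k)[m]? = l[m]? := by
  simp [List.getElem?_take, h]

lemma winserted_append {n : ℕ} (u v : List (WLab n)) :
    winserted (u ++ v) = winserted u ++ winserted v := by
  simp [winserted]

lemma wexec_suffix {n : ℕ} {tr : List (WLab n)} {s : Fin n → List ℕ}
    (h : WExec tr s) : ∀ j, s j <:+ winserted tr := by
  induction h with
  | nil => intro j; exact List.suffix_rfl
  | @snoc tr s l s' hexec hstep ih =>
    intro j
    cases hstep with
    | put x =>
      rw [winserted_append]
      obtain ⟨t, ht⟩ := ih j
      exact ⟨t, by simp [winserted, ← List.append_assoc, ht]⟩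
    | extract i k x hk1 hk2 hshort hx =>
      rw [winserted_append]
      have h1 : Function.update s i ((s i).drop k) j <:+ s j := by
        by_cases hij : j = i
        · subst hij; simp only [Function.update_self]; exact List.drop_suffix k _
        · simp [Function.update_of_ne hij]
      have h2 : winserted [WLab.extract i x] = ([] : List ℕ) := by simp [winserted]
      rw [h2, List.append_nil]
      exact h1.trans (ih j)
    | extractEmpty i hemp =>
      have h2 : winserted [WLab.extractEmpty (n := n) i] = ([] : List ℕ) := by simp [winserted]
      rw [winserted_append, h2, List.append_nil]
      exact ih j

lemma wexec_key {n : ℕ} {tr : List (WLab n)} {s : Fin n → List ℕ}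
    (h : WExec tr s) (hnd : (winserted tr).Nodup) :
    ∀ (i : Fin n) (x a : ℕ), tr[a]? = some (.extract i x) →
      x ∉ s i ∧ x ∈ winserted tr := by
  induction h with
  | nil => intro i x a ha; simp at ha
  | @snoc tr s l s' hexec hstep ih =>
    intro i x a ha
    have hlen : a < tr.length + 1 := by
      obtain ⟨hh, _⟩ := List.getElem?_eq_some_iff.mp ha
      simpa using hh
    rcases Nat.lt_succ_iff_lt_or_eq.mp hlen with hlt | heq
    · -- a is inside tr
      have ha' : tr[a]? = some (.extract i x) := by
        rw [List.getElem?_append_left hlt] at ha; exact ha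
      cases hstep with
      | put y =>
        rw [winserted_append] at hnd
        have hy : winserted [WLab.put (n := n) y] = [y] := by simp [winserted]
        rw [hy] at hnd
        have hnd' : (winserted tr).Nodup := (List.nodup_append.mp hnd).1
        have hynot : y ∉ winserted tr := by
          intro hmem
          exact (List.nodup_append.mp hnd).2.2 y hmem y (by simp) rfl
        obtain ⟨h1, h2⟩ := ih hnd' i x a ha'
        refine ⟨?_, by rw [winserted_append, hy]; exact List.mem_append_left _ h2⟩
        simp only [List.mem_append]
        rintro (hm | hm)
        · exact h1 hm
        · simp only [List.mem_singleton] at hm; subst hm; exact hynot h2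
      | extract j k y hk1 hk2 hshort hx =>
        have hw : winserted (tr ++ [WLab.extract j y]) = winserted tr := by
          rw [winserted_append]; simp [winserted]
        rw [hw] at hnd
        obtain ⟨h1, h2⟩ := ih hnd i x a ha'
        refine ⟨?_, by rw [hw]; exact h2⟩
        by_cases hij : i = j
        · subst hij
          simp only [Function.update_self]
          intro hmem
          exact h1 (List.mem_of_mem_drop hmem)
        · rw [Function.update_of_ne hij]; exact h1
      | extractEmpty j hemp =>
        have hw : winserted (tr ++ [WLab.extractEmpty (n := n) j]) = winserted tr := by
          rw [winserted_append]; simp [winserted]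
        rw [hw] at hnd
        obtain ⟨h1, h2⟩ := ih hnd i x a ha'
        exact ⟨h1, by rw [hw]; exact h2⟩
    · -- a is the last position: the new label is extract i x
      subst heq
      rw [List.getElem?_concat_length] at ha
      cases hstep with
      | put y => simp at ha
      | extract j k y hk1 hk2 hshort hx =>
        injection ha with ha
        injection ha with hij hxy
        subst hij; subst hxy
        have hsuf := wexec_suffix hexec j
        have hw : winserted (tr ++ [WLab.extract j y]) = winserted tr := by
          rw [winserted_append]; simp [winserted]
        rw [hw] at hnd
        have hxmem : y ∈ s j := List.mem_of_getElem? hx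
        have hxw : y ∈ winserted tr := hsuf.subset hxmem
        refine ⟨?_, by rw [hw]; exact hxw⟩
        simp only [Function.update_self]
        have hndsi : (s j).Nodup := hnd.sublist hsuf.sublist
        intro hmem
        have hxtake : y ∈ (s j).take k := by
          have hk : k - 1 < k := Nat.sub_lt hk1 one_pos
          have hgt : ((s j).take k)[k - 1]? = some y := by
            rw [get?_take' _ hk]
            exact hx
          exact List.mem_of_getElem? hgt
        have hsplit : ((s j).take k ++ (s j).drop k).Nodup := by
          rw [List.take_append_drop]; exact hndsi
        exact (List.disjoint_of_nodup_append hsplit) hxtake hmem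
      | extractEmpty j hemp => simp at ha

lemma wexec_take {n : ℕ} {tr : List (WLab n)} {s : Fin n → List ℕ}
    (h : WExec tr s) : ∀ m, ∃ s₁, WExec (tr.take m) s₁ := by
  induction h with
  | nil => intro m; exact ⟨_, by rw [List.take_nil]; exact WExec.nil⟩
  | @snoc tr s l s' hexec hstep ih =>
    intro m
    by_cases hm : m ≤ tr.length
    · rw [List.take_append_of_le_length hm]; exact ih m
    · have hm' : tr.length + 1 ≤ m := by omega
      rw [List.take_of_length_le (by simpa using hm')]
      exact ⟨s', WExec.snoc hexec hstep⟩

lemma wexec_snoc_inv {n : ℕ} {u : List (WLab n)} {s' : Fin n → List ℕ}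
    (h : WExec u s') : ∀ (tr : List (WLab n)) (l : WLab n), u = tr ++ [l] →
    ∃ s₀, WExec tr s₀ ∧ WStep s₀ l s' := by
  cases h with
  | nil => intro tr l hl; exact absurd hl (by simp)
  | @snoc tr' s l' s'' hexec hstep =>
    intro tr l hl
    obtain ⟨h1, h2⟩ := List.append_inj' hl rfl
    injection h2 with h2
    subst h1; subst h2
    exact ⟨_, hexec, hstep⟩

theorem weak_mult_extract_at_most_once_per_process {n : ℕ}
    (tr : List (WLab n)) (s : Fin n → List ℕ) (h : WExec tr s)
    (hnd : (winserted tr).Nodup)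
    (i : Fin n) (x : ℕ) (a b : ℕ)
    (ha : tr[a]? = some (.extract i x))
    (hb : tr[b]? = some (.extract i x)) :
    a = b := by
  by_contra hne
  wlog hab : a < b generalizing a b
  · exact this b a hb ha (Ne.symm hne) (by omega)
  have hblen : b < tr.length := (List.getElem?_eq_some_iff.mp hb).1
  obtain ⟨s₁, hexec1⟩ := wexec_take h (b + 1)
  have hbe : tr[b]? = some (WLab.extract i x) := by
    exact hb
  have htake : tr.take (b + 1) = tr.take b ++ [WLab.extract i x] := by
    rw [List.take_succ, hbe]; rfl
  rw [htake] at hexec1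
  obtain ⟨s₀, hexec0, hstep⟩ := wexec_snoc_inv hexec1 _ _ rfl
  have hsub : List.Sublist (winserted (tr.take b)) (winserted tr) :=
    List.Sublist.filterMap _ (List.take_sublist b tr)
  have hnd0 : (winserted (tr.take b)).Nodup := hnd.sublist hsub
  have ha' : (tr.take b)[a]? = some (.extract i x) := by
    rw [get?_take' _ hab]; exact ha
  have hkey := (wexec_key hexec0 hnd0 i x a ha').1
  cases hstep
  rename_i hx
  exact hkey (List.mem_of_getElem? hx)
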